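/- arXiv:1704.06806 — 3 statements merged into one kernel-verified Lean document; each statement's English description precedes it below -/
import Mathlib

section
/- Let M(a), M(b) be invertible n×n real matrices built from frames of V(a),W(a) and V(b),W(b) respectively. If one replaces the frames by any other frames of the same subspaces, obtaining matrices M̂(a)=M(a)G(a) and M̂(b)=M(b)G(b) with G(a),G(b) block-diagonal invertible matrices varying continuously along a path G(t) of invertible matrices on [a,b], then sign(det(M̂(a)·M̂(b))) = sign(det(M(a)·M(b))). Hence the Z₂-index of a pair of paths of subspaces is independent of the choice of continuous frames. -/
open Matrix

/-- The `ℤ₂`-index associated to the endpoint frame matrices `Ma`, `Mb`: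
`0` if `det (Ma) * det (Mb) > 0` and `1` if `det (Ma) * det (Mb) < 0`. -/
noncomputable def z2Index {ι : Type} [Fintype ι] [DecidableEq ι]
    (Ma Mb : Matrix ι ι ℝ) : ZMod 2 :=
  if 0 < Ma.det * Mb.det then 0 else 1

/-- replacing the frames of `V(a), W(a)` and `V(b), W(b)` changes the
endpoint frame matrices `M a`, `M b` into `M a * G a`, `M b * G b` where `G a`, `G b`
are block-diagonal invertible matrices lying on a continuous path `G` of invertible
matrices on `[a,b]`.  Then the sign of `det (M̂ a * M̂ b)` equals that of
`det (M a * M b)`; hence the `ℤ₂`-index is independent of the choice of frames. -/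
theorem z2Index_wellDefined
    (k m : ℕ) (a b : ℝ) (hab : a ≤ b)
    (M : ℝ → Matrix (Fin k ⊕ Fin m) (Fin k ⊕ Fin m) ℝ)
    (hMa : IsUnit (M a).det) (hMb : IsUnit (M b).det)
    (G : ℝ → Matrix (Fin k ⊕ Fin m) (Fin k ⊕ Fin m) ℝ)
    (hG : ContinuousOn G (Set.Icc a b))
    (hGinv : ∀ t ∈ Set.Icc a b, IsUnit (G t).det)
    (hGa : ∃ (G₁ : Matrix (Fin k) (Fin k) ℝ) (G₂ : Matrix (Fin m) (Fin m) ℝ),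
      IsUnit G₁.det ∧ IsUnit G₂.det ∧ G a = Matrix.fromBlocks G₁ 0 0 G₂)
    (hGb : ∃ (G₁ : Matrix (Fin k) (Fin k) ℝ) (G₂ : Matrix (Fin m) (Fin m) ℝ),
      IsUnit G₁.det ∧ IsUnit G₂.det ∧ G b = Matrix.fromBlocks G₁ 0 0 G₂)
    (Mhat : ℝ → Matrix (Fin k ⊕ Fin m) (Fin k ⊕ Fin m) ℝ)
    (hhata : Mhat a = M a * G a) (hhatb : Mhat b = M b * G b) :
    Real.sign (Mhat a * Mhat b).det = Real.sign (M a * M b).det ∧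
      z2Index (Mhat a) (Mhat b) = z2Index (M a) (M b) := by
  -- the determinant of `G` along the path
  set f : ℝ → ℝ := fun t => (G t).det with hf
  have hfc : ContinuousOn f (Set.Icc a b) :=
    (Continuous.matrix_det continuous_id).comp_continuousOn hG
  have hfne : ∀ t ∈ Set.Icc a b, f t ≠ 0 := fun t ht => (hGinv t ht).ne_zero
  -- `f a` and `f b` have the same sign, else IVT gives a zero of `f`
  have hc : 0 < f a * f b := by
    rcases lt_trichotomy (f a * f b) 0 with h | h | h
    · exfalso
      have haI : a ∈ Set.Icc a b := Set.left_mem_Icc.2 hab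
      have hbI : b ∈ Set.Icc a b := Set.right_mem_Icc.2 hab
      rcases mul_neg_iff.1 h with ⟨h1, h2⟩ | ⟨h1, h2⟩
      · -- f a > 0, f b < 0 : 0 ∈ [f b, f a]
        have : (0:ℝ) ∈ Set.Icc (f b) (f a) := ⟨h2.le, h1.le⟩
        obtain ⟨t, ht, hft⟩ := intermediate_value_Icc' hab hfc this
        exact hfne t ht hft
      · have : (0:ℝ) ∈ Set.Icc (f a) (f b) := ⟨h1.le, h2.le⟩
        obtain ⟨t, ht, hft⟩ := intermediate_value_Icc hab hfc this
        exact hfne t ht hft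
    · exact absurd (mul_eq_zero.1 h)
        (by push_neg; exact ⟨hfne a (Set.left_mem_Icc.2 hab), hfne b (Set.right_mem_Icc.2 hab)⟩)
    · exact h
  have key : (Mhat a * Mhat b).det = (M a * M b).det * (f a * f b) := by
    rw [hhata, hhatb]
    simp only [Matrix.det_mul, hf]
    ring
  have keyd : (Mhat a).det * (Mhat b).det = (M a).det * (M b).det * (f a * f b) := by
    rw [hhata, hhatb]
    simp only [Matrix.det_mul, hf]
    ring
  have hx : (M a * M b).det ≠ 0 := by
    rw [Matrix.det_mul]; exact mul_ne_zero hMa.ne_zero hMb.ne_zero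
  constructor
  · rw [key]
    rcases hx.lt_or_gt with h | h
    · rw [Real.sign_of_neg h, Real.sign_of_neg (mul_neg_of_neg_of_pos h hc)]
    · rw [Real.sign_of_pos h, Real.sign_of_pos (mul_pos h hc)]
  · unfold z2Index
    rw [keyd]
    have : 0 < (M a).det * (M b).det * (f a * f b) ↔ 0 < (M a).det * (M b).det :=
      mul_pos_iff_of_pos_right hc
    simp only [this]
end

section
/- Sum additivity of the Z₂-index: for pairs (V₁,W₁) of continuous paths of subspaces in ℝ^{n₁} and (V₂,W₂) in ℝ^{n₂}, each with transversal endpoints, the Z₂-index of the direct sum satisfies ι(V₁⊕V₂, W₁⊕W₂;[a,b]) ≡ ι(V₁,W₁;[a,b]) + ι(V₂,W₂;[a,b]) (mod 2). -/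
open Matrix

/-- The `i`-th column of a matrix. -/
def Matrix.col' {ι : Type} (M : Matrix ι ι ℝ) (i : ι) : ι → ℝ := fun j => M j i

/-- `M` is a continuous path of frame matrices for the pair of paths of subspaces
`(V, W)` on the parameter set `s`: the columns of `M t` indexed by `c` span `V t`
and the remaining columns span `W t`. -/
def IsFramePath {ι : Type} [Fintype ι] [DecidableEq ι] (c : Set ι)
    (V W : ℝ → Submodule ℝ (ι → ℝ)) (M : ℝ → Matrix ι ι ℝ) (s : Set ℝ) : Prop :=
  ContinuousOn M s ∧
    (∀ t ∈ s, V t = Submodule.span ℝ ((M t).col' '' c)) ∧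
    (∀ t ∈ s, W t = Submodule.span ℝ ((M t).col' '' cᶜ))

section Aux
open Set Submodule Module

variable {ι : Type} [Fintype ι] [DecidableEq ι]

lemma Matrix.mulVec_eq_sum_col' (M : Matrix ι ι ℝ) (x : ι → ℝ) :
    M.mulVec x = ∑ i, x i • M.col' i := by
  funext j
  simp [Matrix.mulVec, dotProduct, Matrix.col', Finset.sum_apply, mul_comm]

lemma Matrix.mul_col' (A B : Matrix ι ι ℝ) (j : ι) :
    (A * B).col' j = A.mulVec (B.col' j) := by
  funext i
  simp [Matrix.col', Matrix.mul_apply, Matrix.mulVec, dotProduct]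

/-- support condition -/
def SuppIn (c : Set ι) (x : ι → ℝ) : Prop := ∀ i, i ∉ c → x i = 0

lemma mulVec_mem_span (M : Matrix ι ι ℝ) {c : Set ι} {x : ι → ℝ} (hx : SuppIn c x) :
    M.mulVec x ∈ span ℝ (M.col' '' c) := by
  rw [M.mulVec_eq_sum_col']
  refine Submodule.sum_mem _ fun i _ => ?_
  by_cases hi : i ∈ c
  · exact Submodule.smul_mem _ _ (subset_span ⟨i, hi, rfl⟩)
  · rw [hx i hi]; simp

lemma exists_suppIn_of_mem_span (M : Matrix ι ι ℝ) {c : Set ι} {v : ι → ℝ}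
    (hv : v ∈ span ℝ (M.col' '' c)) : ∃ x, SuppIn c x ∧ M.mulVec x = v := by
  classical
  rw [Set.image_eq_range] at hv
  obtain ⟨g, hg⟩ := (mem_span_range_iff_exists_fun ℝ).mp hv
  refine ⟨fun i => if h : i ∈ c then g ⟨i, h⟩ else 0, fun i hi => dif_neg hi, ?_⟩
  rw [Matrix.mulVec_eq_sum_col']
  rw [← hg]
  rw [← Finset.sum_subset (Finset.subset_univ c.toFinset)
    (fun i _ hi => by rw [dif_neg (by simpa using hi)]; simp)]
  rw [Finset.sum_subtype c.toFinset (p := (· ∈ c)) (by simp)]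
  refine Finset.sum_congr rfl fun i _ => ?_
  rw [dif_pos i.2]

def BlockInd (M : Matrix ι ι ℝ) (c : Set ι) : Prop :=
  ∀ x : ι → ℝ, SuppIn c x → M.mulVec x = 0 → x = 0

lemma sum_suppIn (M : Matrix ι ι ℝ) {c : Set ι} [Fintype c] {x : ι → ℝ} (hx : SuppIn c x) :
    ∑ i : ι, x i • M.col' i = ∑ i : c, x i • M.col' i := by
  classical
  rw [← Finset.sum_subset (Finset.subset_univ c.toFinset)
    (fun i _ hi => by rw [hx i (by simpa using hi)]; simp)]
  rw [Finset.sum_subtype c.toFinset (p := (· ∈ c)) (by simp)]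

lemma blockInd_of_finrank (M : Matrix ι ι ℝ) (c : Set ι) [Fintype c]
    (h : finrank ℝ (span ℝ (M.col' '' c)) = Fintype.card c) : BlockInd M c := by
  classical
  have hind : LinearIndependent ℝ (fun i : c => M.col' i) := by
    rw [linearIndependent_iff_card_eq_finrank_span]
    rw [Set.finrank, ← Set.image_eq_range]
    exact h.symm
  intro x hx hMx
  rw [Matrix.mulVec_eq_sum_col', sum_suppIn M hx] at hMx
  have hz := Fintype.linearIndependent_iff.mp hind (fun i => x i) hMx
  funext i
  by_cases hi : i ∈ c
  · exact hz ⟨i, hi⟩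
  · exact hx i hi

open scoped Classical in
/-- blocked product `Mᵀ * N` with off-diagonal blocks (w.r.t. `c`) zeroed out. -/
noncomputable def bp (c : Set ι) (M N : Matrix ι ι ℝ) : Matrix ι ι ℝ :=
  Matrix.of fun i j => if (i ∈ c ↔ j ∈ c) then (Mᵀ * N) i j else 0

open scoped Classical in
lemma bp_mulVec_apply (c : Set ι) (M N : Matrix ι ι ℝ) (x : ι → ℝ) (i : ι) :
    (bp c M N).mulVec x i
      = ∑ l, (if (i ∈ c ↔ l ∈ c) then (Mᵀ * N) i l else 0) * x l := by
  simp [bp, Matrix.mulVec, dotProduct]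

lemma transpose_mul_apply (M N : Matrix ι ι ℝ) (i j : ι) :
    (Mᵀ * N) i j = dotProduct (M.col' i) (N.col' j) := by
  simp [Matrix.mul_apply, dotProduct, Matrix.col', Matrix.transpose_apply]

lemma dot_col_mulVec (M N : Matrix ι ι ℝ) (i : ι) (z : ι → ℝ) :
    dotProduct (M.col' i) (N.mulVec z) = ∑ l, (Mᵀ * N) i l * z l := by
  simp only [dotProduct, Matrix.mulVec, Matrix.col', Matrix.mul_apply,
    Matrix.transpose_apply, Finset.mul_sum, Finset.sum_mul]
  rw [Finset.sum_comm]
  exact Finset.sum_congr rfl fun l _ => Finset.sum_congr rfl fun j _ => by ring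

open scoped Classical in
lemma bp_col_eq (c : Set ι) (M N : Matrix ι ι ℝ) (j : ι) (y : ι → ℝ)
    (hy : ∀ i, ¬((i ∈ c) ↔ (j ∈ c)) → y i = 0)
    (hMy : M.mulVec y = N.col' j) :
    (bp c M N).col' j = (bp c M M).mulVec y := by
  funext i
  rw [bp_mulVec_apply]
  by_cases hij : (i ∈ c) ↔ (j ∈ c)
  · have : (bp c M N).col' j i = (Mᵀ * N) i j := by simp [bp, Matrix.col', hij]
    rw [this, transpose_mul_apply, ← hMy, dot_col_mulVec]
    refine Finset.sum_congr rfl fun l _ => ?_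
    by_cases hil : (i ∈ c) ↔ (l ∈ c)
    · rw [if_pos hil]
    · rw [if_neg hil, hy l (fun h => hil (hij.trans h.symm)), mul_zero, mul_zero]
  · have : (bp c M N).col' j i = 0 := by simp [bp, Matrix.col', hij]
    rw [this]
    symm
    refine Finset.sum_eq_zero fun l _ => ?_
    by_cases hil : (i ∈ c) ↔ (l ∈ c)
    · rw [hy l (fun h => hij (hil.trans h)), mul_zero]
    · rw [if_neg hil, zero_mul]

lemma core_identity (c : Set ι) (M N : Matrix ι ι ℝ)
    (h1 : span ℝ (N.col' '' c) ≤ span ℝ (M.col' '' c))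
    (h2 : span ℝ (N.col' '' cᶜ) ≤ span ℝ (M.col' '' cᶜ)) :
    M * ((bp c M M).adjugate * bp c M N) = (bp c M M).det • N := by
  classical
  -- columnwise
  have hcol : ∀ j, (M * ((bp c M M).adjugate * bp c M N)).col' j
      = ((bp c M M).det • N).col' j := by
    intro j
    -- find the representing coefficients
    have hex : ∃ y, (∀ i, ¬((i ∈ c) ↔ (j ∈ c)) → y i = 0) ∧ M.mulVec y = N.col' j := by
      by_cases hj : j ∈ c
      · obtain ⟨y, hy, hMy⟩ := exists_suppIn_of_mem_span M
          (h1 (subset_span ⟨j, hj, rfl⟩))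
        exact ⟨y, fun i hi => hy i (fun h => hi (iff_of_true h hj)), hMy⟩
      · obtain ⟨y, hy, hMy⟩ := exists_suppIn_of_mem_span M
          (h2 (subset_span ⟨j, hj, rfl⟩))
        exact ⟨y, fun i hi => hy i (fun h => hi (iff_of_false h hj)), hMy⟩
    obtain ⟨y, hy, hMy⟩ := hex
    have hb := bp_col_eq c M N j y hy hMy
    rw [Matrix.mul_col', Matrix.mul_col', hb, Matrix.mulVec_mulVec,
      Matrix.mulVec_mulVec, mul_assoc, Matrix.adjugate_mul, Matrix.mul_smul,
      mul_one, Matrix.smul_mulVec, hMy]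
    funext i
    simp [Matrix.col', Matrix.smul_apply]
  ext i j
  have := congrFun (hcol j) i
  simpa [Matrix.col'] using this

lemma mulVec_dot (M : Matrix ι ι ℝ) (y u : ι → ℝ) :
    dotProduct (M.mulVec y) u = ∑ i, y i * dotProduct (M.col' i) u := by
  simp only [dotProduct, Matrix.mulVec, Matrix.col', Finset.sum_mul, Finset.mul_sum]
  rw [Finset.sum_comm]
  exact Finset.sum_congr rfl fun i _ => Finset.sum_congr rfl fun j _ => by ring

open scoped Classical in
lemma bp_det_ne_zero (c : Set ι) (M N : Matrix ι ι ℝ)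
    (h1 : span ℝ (N.col' '' c) ≤ span ℝ (M.col' '' c))
    (h2 : span ℝ (N.col' '' cᶜ) ≤ span ℝ (M.col' '' cᶜ))
    (hN1 : BlockInd N c) (hN2 : BlockInd N cᶜ) :
    (bp c M N).det ≠ 0 := by
  intro h
  obtain ⟨x, hx0, hx⟩ := Matrix.exists_mulVec_eq_zero_iff.mpr h
  -- key step : for a set d (either c or cᶜ), the "d-part" of x vanishes
  have key : ∀ d : Set ι, (d = c ∨ d = cᶜ) → ∀ i ∈ d, x i = 0 := by
    rintro d hd
    set xd : ι → ℝ := fun i => if i ∈ d then x i else 0 with hxd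
    have hsupp : SuppIn d xd := fun i hi => if_neg hi
    set u : ι → ℝ := N.mulVec xd with hu
    -- ⟨M.col' i, u⟩ = 0 for all i ∈ d
    have hdot : ∀ i ∈ d, dotProduct (M.col' i) u = 0 := by
      intro i hi
      have hxi := congrFun hx i
      have hmemiff : ∀ l : ι, ((i ∈ c) ↔ (l ∈ c)) ↔ l ∈ d := by
        intro l
        rcases hd with rfl | rfl
        · exact ⟨fun hl => hl.mp hi, fun hl => iff_of_true hi hl⟩
        · exact ⟨fun hl => fun hlc => hi (hl.mpr hlc),
            fun hl => iff_of_false hi hl⟩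
      rw [bp_mulVec_apply] at hxi
      simp only [Pi.zero_apply] at hxi
      rw [hu, dot_col_mulVec]
      rw [← hxi]
      refine Finset.sum_congr rfl fun l _ => ?_
      by_cases hl : l ∈ d
      · rw [if_pos ((hmemiff l).mpr hl), hxd]
        simp [hl]
      · rw [if_neg (fun hc => hl ((hmemiff l).mp hc)), hxd]
        simp [hl]
    -- u lies in the span of the d-columns of M
    have humem : u ∈ span ℝ (M.col' '' d) := by
      have : u ∈ span ℝ (N.col' '' d) := mulVec_mem_span N hsupp
      rcases hd with rfl | rfl
      · exact h1 this
      · exact h2 this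
    obtain ⟨y, hy, hMy⟩ := exists_suppIn_of_mem_span M humem
    have hu0 : u = 0 := by
      rw [← dotProduct_self_eq_zero (v := u)]
      nth_rewrite 1 [← hMy]
      rw [mulVec_dot]
      refine Finset.sum_eq_zero fun i _ => ?_
      by_cases hi : i ∈ d
      · rw [hdot i hi, mul_zero]
      · rw [hy i hi, zero_mul]
    have hNxd : N.mulVec xd = 0 := hu ▸ hu0
    have hxd0 : xd = 0 := by
      rcases hd with rfl | rfl
      · exact hN1 xd hsupp hNxd
      · exact hN2 xd hsupp hNxd
    intro i hi
    have h0 := congrFun hxd0 i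
    simpa [hxd, hi] using h0
  have : x = 0 := by
    funext i
    by_cases hi : i ∈ c
    · exact key c (Or.inl rfl) i hi
    · exact key cᶜ (Or.inr rfl) i hi
  exact hx0 this

lemma sign_const {f : ℝ → ℝ} {a b : ℝ} (hab : a ≤ b) (hf : ContinuousOn f (Set.Icc a b))
    (h0 : ∀ t ∈ Set.Icc a b, f t ≠ 0) : 0 < f a * f b := by
  have ha := h0 a (Set.left_mem_Icc.mpr hab)
  have hb := h0 b (Set.right_mem_Icc.mpr hab)
  have hIVT : ¬ (0 ∈ Set.uIcc (f a) (f b)) := by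
    intro hmem
    have := intermediate_value_uIcc (by rwa [Set.uIcc_of_le hab]) hmem
    obtain ⟨t, ht, hft⟩ := this
    rw [Set.uIcc_of_le hab] at ht
    exact h0 t ht hft
  rcases ha.lt_or_gt with ha' | ha' <;> rcases hb.lt_or_gt with hb' | hb'
  · exact mul_pos_of_neg_of_neg ha' hb'
  · exact absurd (Set.mem_uIcc.mpr (Or.inl ⟨ha'.le, hb'.le⟩)) hIVT
  · exact absurd (Set.mem_uIcc.mpr (Or.inr ⟨hb'.le, ha'.le⟩)) hIVT
  · exact mul_pos ha' hb'

open scoped Classical in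
lemma bp_continuousOn {M N : ℝ → Matrix ι ι ℝ} {s : Set ℝ}
    (hM : ContinuousOn M s) (hN : ContinuousOn N s) (c : Set ι) :
    ContinuousOn (fun t => (bp c (M t) (N t)).det) s := by
  have hent : ∀ (P : ℝ → Matrix ι ι ℝ), ContinuousOn P s → ∀ i j,
      ContinuousOn (fun t => P t i j) s := by
    intro P hP i j
    exact (continuous_apply_apply i j).comp_continuousOn hP
  have hbp : ContinuousOn (fun t => bp c (M t) (N t)) s := by
    apply continuousOn_pi.mpr
    intro i
    apply continuousOn_pi.mpr
    intro j
    by_cases hij : (i ∈ c) ↔ (j ∈ c)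
    · have : (fun t => bp c (M t) (N t) i j) = fun t => ∑ k, M t k i * N t k j := by
        funext t
        simp [bp, hij, Matrix.mul_apply]
      rw [this]
      exact continuousOn_finset_sum _ fun k _ => (hent M hM k i).mul (hent N hN k j)
    · have : (fun t => bp c (M t) (N t) i j) = fun _ => 0 := by
        funext t
        simp [bp, hij]
      rw [this]
      exact continuousOn_const
  exact (Continuous.matrix_det continuous_id).comp_continuousOn hbp

/-- The main abstract sign lemma. -/
lemma sign_lemma (c : Set ι) (a b : ℝ) (hab : a ≤ b)
    (M N : ℝ → Matrix ι ι ℝ)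
    (hMc : ContinuousOn M (Set.Icc a b)) (hNc : ContinuousOn N (Set.Icc a b))
    (hsc : ∀ t ∈ Set.Icc a b, span ℝ ((N t).col' '' c) = span ℝ ((M t).col' '' c))
    (hscc : ∀ t ∈ Set.Icc a b, span ℝ ((N t).col' '' cᶜ) = span ℝ ((M t).col' '' cᶜ))
    (hIM : ∀ t ∈ Set.Icc a b, BlockInd (M t) c ∧ BlockInd (M t) cᶜ)
    (hIN : ∀ t ∈ Set.Icc a b, BlockInd (N t) c ∧ BlockInd (N t) cᶜ)
    (hNa : (N a).det ≠ 0) (hNb : (N b).det ≠ 0) :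
    0 < ((M a).det * (M b).det) * ((N a).det * (N b).det) := by
  classical
  set n := Fintype.card ι with hn
  set ψ : ℝ → ℝ := fun t => (bp c (M t) (M t)).det with hψ
  set φ : ℝ → ℝ := fun t => (bp c (M t) (N t)).det with hφ
  have hψ0 : ∀ t ∈ Set.Icc a b, ψ t ≠ 0 := fun t ht =>
    bp_det_ne_zero c (M t) (M t) le_rfl le_rfl (hIM t ht).1 (hIM t ht).2
  have hφ0 : ∀ t ∈ Set.Icc a b, φ t ≠ 0 := fun t ht =>
    bp_det_ne_zero c (M t) (N t) (le_of_eq (hsc t ht)) (le_of_eq (hscc t ht))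
      (hIN t ht).1 (hIN t ht).2
  have key : ∀ t ∈ Set.Icc a b,
      (M t).det * (ψ t) ^ (n - 1) * (φ t) = (ψ t) ^ n * (N t).det := by
    intro t ht
    have := congrArg Matrix.det (core_identity c (M t) (N t)
      (le_of_eq (hsc t ht)) (le_of_eq (hscc t ht)))
    rwa [Matrix.det_mul, Matrix.det_mul, Matrix.det_adjugate, Matrix.det_smul,
      ← mul_assoc] at this
  have hψab : 0 < ψ a * ψ b := sign_const hab (bp_continuousOn hMc hMc c) hψ0
  have hφab : 0 < φ a * φ b := sign_const hab (bp_continuousOn hMc hNc c) hφ0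
  have ea := key a (Set.left_mem_Icc.mpr hab)
  have eb := key b (Set.right_mem_Icc.mpr hab)
  have e2 : ((M a).det * (M b).det) * ((ψ a * ψ b) ^ (n - 1)) * (φ a * φ b)
      = (ψ a * ψ b) ^ n * ((N a).det * (N b).det) := by
    calc ((M a).det * (M b).det) * ((ψ a * ψ b) ^ (n - 1)) * (φ a * φ b)
        = ((M a).det * (ψ a) ^ (n - 1) * (φ a)) * ((M b).det * (ψ b) ^ (n - 1) * (φ b)) := by
          rw [mul_pow]; ring
      _ = ((ψ a) ^ n * (N a).det) * ((ψ b) ^ n * (N b).det) := by rw [ea, eb]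
      _ = (ψ a * ψ b) ^ n * ((N a).det * (N b).det) := by rw [mul_pow]; ring
  have hupos : 0 < (ψ a * ψ b) ^ (n - 1) * (φ a * φ b) :=
    mul_pos (pow_pos hψab _) hφab
  have hq : (N a).det * (N b).det ≠ 0 := mul_ne_zero hNa hNb
  have h3 : 0 < (((M a).det * (M b).det) * ((N a).det * (N b).det))
      * ((ψ a * ψ b) ^ (n - 1) * (φ a * φ b)) := by
    have : (((M a).det * (M b).det) * ((N a).det * (N b).det))
        * ((ψ a * ψ b) ^ (n - 1) * (φ a * φ b))
        = (ψ a * ψ b) ^ n * ((N a).det * (N b).det) ^ 2 := by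
      linear_combination ((N a).det * (N b).det) * e2
    rw [this]
    exact mul_pos (pow_pos hψab _) (pow_two_pos_of_ne_zero hq)
  nlinarith [h3, hupos]

lemma blockInd_of_finrank' (M : Matrix ι ι ℝ) (c : Set ι)
    (h : finrank ℝ (span ℝ (M.col' '' c)) = Nat.card c) : BlockInd M c := by
  classical
  exact blockInd_of_finrank M c (by rw [h, Nat.card_eq_fintype_card])

lemma det_ne_zero_of_spans (M : Matrix ι ι ℝ) (c : Set ι)
    (h : span ℝ (M.col' '' c) ⊔ span ℝ (M.col' '' cᶜ) = ⊤) : M.det ≠ 0 := by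
  have htop : span ℝ (Set.range M.col') = ⊤ := by
    rw [← Set.image_univ, ← Set.union_compl_self c, Set.image_union, span_union, h]
  have hrange : Set.range M.col = Set.range M.col' := rfl
  have hsurj : Function.Surjective M.mulVecLin := by
    rw [← LinearMap.range_eq_top, Matrix.range_mulVecLin, hrange, htop]
  have hinj : Function.Injective M.mulVecLin :=
    (LinearMap.injective_iff_surjective).mpr hsurj
  intro hdet
  obtain ⟨v, hv0, hv⟩ := Matrix.exists_mulVec_eq_zero_iff.mpr hdet
  exact hv0 (hinj (by simpa [Matrix.mulVecLin_apply] using hv))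

end Aux

section Sum
open Set Submodule Module

variable {α β : Type} [Fintype α] [Fintype β] [DecidableEq α] [DecidableEq β]

/-- inclusion of the first factor of functions on a sum type -/
def L1 : (α → ℝ) →ₗ[ℝ] (α ⊕ β → ℝ) where
  toFun v := Sum.elim v 0
  map_add' u v := by funext i; cases i <;> simp
  map_smul' r v := by funext i; cases i <;> simp

def L2 : (β → ℝ) →ₗ[ℝ] (α ⊕ β → ℝ) where
  toFun v := Sum.elim 0 v
  map_add' u v := by funext i; cases i <;> simp
  map_smul' r v := by funext i; cases i <;> simp

lemma comap_prod_eq (P : Submodule ℝ (α → ℝ)) (Q : Submodule ℝ (β → ℝ)) :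
    Submodule.comap (LinearEquiv.sumArrowLequivProdArrow α β ℝ ℝ).toLinearMap (P.prod Q)
      = Submodule.map (L1 (α := α) (β := β)) P ⊔ Submodule.map (L2 (α := α) (β := β)) Q := by
  ext x
  have hfst : (LinearEquiv.sumArrowLequivProdArrow α β ℝ ℝ x).1 = x ∘ Sum.inl := rfl
  have hsnd : (LinearEquiv.sumArrowLequivProdArrow α β ℝ ℝ x).2 = x ∘ Sum.inr := rfl
  simp only [Submodule.mem_comap, LinearEquiv.coe_coe, Submodule.mem_prod, hfst, hsnd]
  constructor
  · rintro ⟨h1, h2⟩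
    rw [Submodule.mem_sup]
    refine ⟨L1 (x ∘ Sum.inl), ⟨x ∘ Sum.inl, h1, rfl⟩, L2 (x ∘ Sum.inr), ⟨x ∘ Sum.inr, h2, rfl⟩, ?_⟩
    funext i; cases i <;> simp [L1, L2]
  · intro hx
    rw [Submodule.mem_sup] at hx
    obtain ⟨u, hu, v, hv, rfl⟩ := hx
    obtain ⟨p, hp, rfl⟩ := hu
    obtain ⟨q, hq, rfl⟩ := hv
    constructor
    · have : (L1 p + L2 q) ∘ Sum.inl = p := by funext i; simp [L1, L2]
      rwa [this]
    · have : (L1 p + L2 q) ∘ Sum.inr = q := by funext i; simp [L1, L2]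
      rwa [this]

lemma fromBlocks_col_inl (A : Matrix α α ℝ) (B : Matrix β β ℝ) (i : α) :
    (Matrix.fromBlocks A 0 0 B).col' (Sum.inl i) = L1 (β := β) (A.col' i) := by
  funext j; cases j <;> simp [Matrix.col', L1]

lemma fromBlocks_col_inr (A : Matrix α α ℝ) (B : Matrix β β ℝ) (i : β) :
    (Matrix.fromBlocks A 0 0 B).col' (Sum.inr i) = L2 (α := α) (B.col' i) := by
  funext j; cases j <;> simp [Matrix.col', L2]

lemma span_sum_cols (A : Matrix α α ℝ) (B : Matrix β β ℝ) (c₁ : Set α) (c₂ : Set β) :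
    span ℝ ((Matrix.fromBlocks A 0 0 B).col' '' (Sum.inl '' c₁ ∪ Sum.inr '' c₂))
      = Submodule.comap (LinearEquiv.sumArrowLequivProdArrow α β ℝ ℝ).toLinearMap
          ((span ℝ (A.col' '' c₁)).prod (span ℝ (B.col' '' c₂))) := by
  rw [comap_prod_eq, Submodule.map_span, Submodule.map_span, ← span_union]
  congr 1
  rw [Set.image_union, Set.image_image, Set.image_image, Set.image_image, Set.image_image]
  congr 1
  · exact Set.image_congr fun i _ => fromBlocks_col_inl A B i
  · exact Set.image_congr fun i _ => fromBlocks_col_inr A B i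

lemma compl_sum_union (c₁ : Set α) (c₂ : Set β) :
    (Sum.inl '' c₁ ∪ Sum.inr '' c₂)ᶜ = (Sum.inl '' c₁ᶜ ∪ Sum.inr '' c₂ᶜ : Set (α ⊕ β)) := by
  ext x; cases x <;> simp

lemma blockInd_sum (A : Matrix α α ℝ) (B : Matrix β β ℝ) {ca : Set α} {cb : Set β}
    (hA : BlockInd A ca) (hB : BlockInd B cb) :
    BlockInd (Matrix.fromBlocks A 0 0 B) (Sum.inl '' ca ∪ Sum.inr '' cb) := by
  intro x hsupp hx
  have h1 : A.mulVec (x ∘ Sum.inl) = 0 := by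
    funext j
    have := congrFun hx (Sum.inl j)
    simpa [Matrix.fromBlocks_mulVec] using this
  have h2 : B.mulVec (x ∘ Sum.inr) = 0 := by
    funext j
    have := congrFun hx (Sum.inr j)
    simpa [Matrix.fromBlocks_mulVec] using this
  have hx1 : x ∘ Sum.inl = 0 := hA _ (fun i hi => hsupp (Sum.inl i) (by simp [hi])) h1
  have hx2 : x ∘ Sum.inr = 0 := hB _ (fun i hi => hsupp (Sum.inr i) (by simp [hi])) h2
  funext i
  cases i with
  | inl i => exact congrFun hx1 i
  | inr i => exact congrFun hx2 i

/-- product of submodules is linearly equivalent to the product module -/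
def prodEquivAux {R M N : Type*} [Ring R] [AddCommGroup M] [AddCommGroup N]
    [Module R M] [Module R N] (p : Submodule R M) (q : Submodule R N) :
    (p.prod q) ≃ₗ[R] p × q where
  toFun x := (⟨x.1.1, x.2.1⟩, ⟨x.1.2, x.2.2⟩)
  invFun u := ⟨(u.1.1, u.2.1), ⟨u.1.2, u.2.2⟩⟩
  map_add' x y := rfl
  map_smul' r x := rfl
  left_inv x := rfl
  right_inv u := rfl

lemma finrank_submodule_prod {R M N : Type*} [Field R] [AddCommGroup M] [AddCommGroup N]
    [Module R M] [Module R N] [FiniteDimensional R M] [FiniteDimensional R N]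
    (p : Submodule R M) (q : Submodule R N) :
    finrank R (p.prod q) = finrank R p + finrank R q := by
  rw [LinearEquiv.finrank_eq (prodEquivAux p q), Module.finrank_prod]

end Sum

section Card
open Set

lemma ncard_fin_lt {n k : ℕ} (h : k ≤ n) : ({i : Fin n | (i : ℕ) < k}).ncard = k := by
  rw [← Fin.range_castLE h, ← Set.image_univ,
    Set.ncard_image_of_injective _ (Fin.castLE_injective h), Set.ncard_univ,
    Nat.card_eq_fintype_card, Fintype.card_fin]

lemma ncard_fin_lt_compl {n k : ℕ} (h : k ≤ n) :
    ({i : Fin n | (i : ℕ) < k}ᶜ).ncard = n - k := by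
  have := Set.ncard_add_ncard_compl {i : Fin n | (i : ℕ) < k}
  rw [ncard_fin_lt h, Nat.card_eq_fintype_card, Fintype.card_fin] at this
  omega

lemma ncard_sum_union {α β : Type} [Fintype α] [Fintype β] (c₁ : Set α) (c₂ : Set β) :
    ((Sum.inl '' c₁ ∪ Sum.inr '' c₂ : Set (α ⊕ β))).ncard = c₁.ncard + c₂.ncard := by
  rw [Set.ncard_union_eq (by rw [Set.disjoint_iff_inter_eq_empty]; ext x; cases x <;> simp)]
  rw [Set.ncard_image_of_injective _ Sum.inl_injective,
    Set.ncard_image_of_injective _ Sum.inr_injective]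

end Card


section Main
open Set Submodule Module

/-- sum additivity of the ℤ₂-index:
`ι(V₁⊕V₂, W₁⊕W₂;[a,b]) ≡ ι(V₁,W₁;[a,b]) + ι(V₂,W₂;[a,b]) (mod 2)`. -/
theorem z2Index_sum_additivity
    (n₁ n₂ k₁ k₂ : ℕ) (a b : ℝ) (hab : a ≤ b)
    (V₁ W₁ : ℝ → Submodule ℝ (Fin n₁ → ℝ)) (V₂ W₂ : ℝ → Submodule ℝ (Fin n₂ → ℝ))
    (M₁ : ℝ → Matrix (Fin n₁) (Fin n₁) ℝ) (M₂ : ℝ → Matrix (Fin n₂) (Fin n₂) ℝ)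
    (hM₁ : IsFramePath {i : Fin n₁ | (i : ℕ) < k₁} V₁ W₁ M₁ (Set.Icc a b))
    (hM₂ : IsFramePath {i : Fin n₂ | (i : ℕ) < k₂} V₂ W₂ M₂ (Set.Icc a b))
    (hk₁ : ∀ t ∈ Set.Icc a b, Module.finrank ℝ (V₁ t) = k₁ ∧ Module.finrank ℝ (W₁ t) = n₁ - k₁)
    (hk₂ : ∀ t ∈ Set.Icc a b, Module.finrank ℝ (V₂ t) = k₂ ∧ Module.finrank ℝ (W₂ t) = n₂ - k₂)
    (hta₁ : V₁ a ⊔ W₁ a = ⊤) (htb₁ : V₁ b ⊔ W₁ b = ⊤)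
    (hta₂ : V₂ a ⊔ W₂ a = ⊤) (htb₂ : V₂ b ⊔ W₂ b = ⊤)
    -- the direct-sum paths `V₁ ⊕ V₂` and `W₁ ⊕ W₂` inside `ℝ^{n₁} × ℝ^{n₂}`,
    -- realized on `Fin n₁ ⊕ Fin n₂ → ℝ` via the canonical linear equivalence:
    (Ms : ℝ → Matrix (Fin n₁ ⊕ Fin n₂) (Fin n₁ ⊕ Fin n₂) ℝ)
    (hMs : IsFramePath
      ((Sum.inl '' {i : Fin n₁ | (i : ℕ) < k₁}) ∪ (Sum.inr '' {i : Fin n₂ | (i : ℕ) < k₂}))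
      (fun t => Submodule.comap
        (LinearEquiv.sumArrowLequivProdArrow (Fin n₁) (Fin n₂) ℝ ℝ).toLinearMap
        ((V₁ t).prod (V₂ t)))
      (fun t => Submodule.comap
        (LinearEquiv.sumArrowLequivProdArrow (Fin n₁) (Fin n₂) ℝ ℝ).toLinearMap
        ((W₁ t).prod (W₂ t)))
      Ms (Set.Icc a b)) :
    z2Index (Ms a) (Ms b) = z2Index (M₁ a) (M₁ b) + z2Index (M₂ a) (M₂ b) := by
  classical
  obtain ⟨hMsc, hMsV, hMsW⟩ := hMs
  obtain ⟨hM₁c, hV₁, hW₁⟩ := hM₁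
  obtain ⟨hM₂c, hV₂, hW₂⟩ := hM₂
  set e := LinearEquiv.sumArrowLequivProdArrow (Fin n₁) (Fin n₂) ℝ ℝ with he
  set c₁ : Set (Fin n₁) := {i | (i : ℕ) < k₁} with hc₁
  set c₂ : Set (Fin n₂) := {i | (i : ℕ) < k₂} with hc₂
  set cs : Set (Fin n₁ ⊕ Fin n₂) := Sum.inl '' c₁ ∪ Sum.inr '' c₂ with hcs
  have ha : a ∈ Set.Icc a b := Set.left_mem_Icc.mpr hab
  have hb : b ∈ Set.Icc a b := Set.right_mem_Icc.mpr hab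
  have hk₁n : k₁ ≤ n₁ := by
    rw [← (hk₁ a ha).1]
    calc finrank ℝ (V₁ a) ≤ finrank ℝ (Fin n₁ → ℝ) := Submodule.finrank_le _
      _ = n₁ := Module.finrank_fin_fun ℝ
  have hk₂n : k₂ ≤ n₂ := by
    rw [← (hk₂ a ha).1]
    calc finrank ℝ (V₂ a) ≤ finrank ℝ (Fin n₂ → ℝ) := Submodule.finrank_le _
      _ = n₂ := Module.finrank_fin_fun ℝ
  -- block independence of M₁, M₂
  have hBI₁ : ∀ t ∈ Set.Icc a b, BlockInd (M₁ t) c₁ ∧ BlockInd (M₁ t) c₁ᶜ := by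
    intro t ht
    constructor
    · exact blockInd_of_finrank' _ _ (by
        rw [← hV₁ t ht, (hk₁ t ht).1, Nat.card_coe_set_eq, ncard_fin_lt hk₁n])
    · exact blockInd_of_finrank' _ _ (by
        rw [← hW₁ t ht, (hk₁ t ht).2, Nat.card_coe_set_eq, ncard_fin_lt_compl hk₁n])
  have hBI₂ : ∀ t ∈ Set.Icc a b, BlockInd (M₂ t) c₂ ∧ BlockInd (M₂ t) c₂ᶜ := by
    intro t ht
    constructor
    · exact blockInd_of_finrank' _ _ (by
        rw [← hV₂ t ht, (hk₂ t ht).1, Nat.card_coe_set_eq, ncard_fin_lt hk₂n])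
    · exact blockInd_of_finrank' _ _ (by
        rw [← hW₂ t ht, (hk₂ t ht).2, Nat.card_coe_set_eq, ncard_fin_lt_compl hk₂n])
  -- the block-diagonal frame path
  set D : ℝ → Matrix (Fin n₁ ⊕ Fin n₂) (Fin n₁ ⊕ Fin n₂) ℝ :=
    fun t => Matrix.fromBlocks (M₁ t) 0 0 (M₂ t) with hD
  have hDspanV : ∀ t ∈ Set.Icc a b, span ℝ ((D t).col' '' cs)
      = Submodule.comap e.toLinearMap ((V₁ t).prod (V₂ t)) := by
    intro t ht
    rw [hD, hcs, span_sum_cols, ← hV₁ t ht, ← hV₂ t ht]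
  have hDspanW : ∀ t ∈ Set.Icc a b, span ℝ ((D t).col' '' csᶜ)
      = Submodule.comap e.toLinearMap ((W₁ t).prod (W₂ t)) := by
    intro t ht
    rw [hD, hcs, compl_sum_union, span_sum_cols, ← hW₁ t ht, ← hW₂ t ht]
  have hsc : ∀ t ∈ Set.Icc a b, span ℝ ((D t).col' '' cs) = span ℝ ((Ms t).col' '' cs) := by
    intro t ht
    rw [hDspanV t ht]
    simpa using hMsV t ht
  have hscc : ∀ t ∈ Set.Icc a b, span ℝ ((D t).col' '' csᶜ) = span ℝ ((Ms t).col' '' csᶜ) := by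
    intro t ht
    rw [hDspanW t ht]
    simpa using hMsW t ht
  -- continuity of D
  have hDc : ContinuousOn D (Set.Icc a b) := by
    apply continuousOn_pi.mpr
    intro i
    apply continuousOn_pi.mpr
    intro j
    rcases i with i | i <;> rcases j with j | j
    · exact (continuousOn_pi.1 (continuousOn_pi.1 hM₁c i) j)
    · exact continuousOn_const
    · exact continuousOn_const
    · exact (continuousOn_pi.1 (continuousOn_pi.1 hM₂c i) j)
  -- block independence of D and Ms
  have hID : ∀ t ∈ Set.Icc a b, BlockInd (D t) cs ∧ BlockInd (D t) csᶜ := by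
    intro t ht
    constructor
    · exact blockInd_sum _ _ (hBI₁ t ht).1 (hBI₂ t ht).1
    · rw [hcs, compl_sum_union]
      exact blockInd_sum _ _ (hBI₁ t ht).2 (hBI₂ t ht).2
  have hIMs : ∀ t ∈ Set.Icc a b, BlockInd (Ms t) cs ∧ BlockInd (Ms t) csᶜ := by
    intro t ht
    constructor
    · refine blockInd_of_finrank' _ _ ?_
      have hsp : span ℝ ((Ms t).col' '' cs) = Submodule.comap e.toLinearMap
          ((V₁ t).prod (V₂ t)) := by simpa using (hMsV t ht).symm
      rw [hsp, Submodule.comap_equiv_eq_map_symm, LinearEquiv.finrank_map_eq,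
        finrank_submodule_prod, (hk₁ t ht).1, (hk₂ t ht).1, Nat.card_coe_set_eq,
        hcs, ncard_sum_union, ncard_fin_lt hk₁n, ncard_fin_lt hk₂n]
    · refine blockInd_of_finrank' _ _ ?_
      have hsp : span ℝ ((Ms t).col' '' csᶜ) = Submodule.comap e.toLinearMap
          ((W₁ t).prod (W₂ t)) := by simpa using (hMsW t ht).symm
      rw [hsp, Submodule.comap_equiv_eq_map_symm, LinearEquiv.finrank_map_eq,
        finrank_submodule_prod, (hk₁ t ht).2, (hk₂ t ht).2, Nat.card_coe_set_eq,
        hcs, compl_sum_union, ncard_sum_union, ncard_fin_lt_compl hk₁n,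
        ncard_fin_lt_compl hk₂n]
  -- endpoint determinants
  have hdet1a : (M₁ a).det ≠ 0 :=
    det_ne_zero_of_spans _ c₁ (by rw [← hV₁ a ha, ← hW₁ a ha, hta₁])
  have hdet1b : (M₁ b).det ≠ 0 :=
    det_ne_zero_of_spans _ c₁ (by rw [← hV₁ b hb, ← hW₁ b hb, htb₁])
  have hdet2a : (M₂ a).det ≠ 0 :=
    det_ne_zero_of_spans _ c₂ (by rw [← hV₂ a ha, ← hW₂ a ha, hta₂])
  have hdet2b : (M₂ b).det ≠ 0 :=
    det_ne_zero_of_spans _ c₂ (by rw [← hV₂ b hb, ← hW₂ b hb, htb₂])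
  have hdetD : ∀ t, (D t).det = (M₁ t).det * (M₂ t).det := by
    intro t
    rw [hD]
    exact Matrix.det_fromBlocks_zero₂₁ _ _ _
  have hdetDa : (D a).det ≠ 0 := by rw [hdetD]; exact mul_ne_zero hdet1a hdet2a
  have hdetDb : (D b).det ≠ 0 := by rw [hdetD]; exact mul_ne_zero hdet1b hdet2b
  -- the sign comparison
  have hsign := sign_lemma cs a b hab Ms D hMsc hDc
    (fun t ht => hsc t ht) (fun t ht => hscc t ht)
    hIMs hID hdetDa hdetDb
  rw [hdetD, hdetD] at hsign
  -- final arithmetic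
  have harith : 0 < ((Ms a).det * (Ms b).det)
      * (((M₁ a).det * (M₁ b).det) * ((M₂ a).det * (M₂ b).det)) := by
    nlinarith [hsign]
  unfold z2Index
  rcases (mul_ne_zero hdet1a hdet1b).lt_or_gt with h₁ | h₁ <;>
    rcases (mul_ne_zero hdet2a hdet2b).lt_or_gt with h₂ | h₂
  · have hps : 0 < (Ms a).det * (Ms b).det := by nlinarith [mul_pos_of_neg_of_neg h₁ h₂]
    rw [if_pos hps, if_neg (not_lt.mpr h₁.le), if_neg (not_lt.mpr h₂.le)]
    decide
  · have hps : ¬ (0 < (Ms a).det * (Ms b).det) := by nlinarith [mul_neg_of_neg_of_pos h₁ h₂]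
    rw [if_neg hps, if_neg (not_lt.mpr h₁.le), if_pos h₂]
    decide
  · have hps : ¬ (0 < (Ms a).det * (Ms b).det) := by nlinarith [mul_neg_of_pos_of_neg h₁ h₂]
    rw [if_neg hps, if_pos h₁, if_neg (not_lt.mpr h₂.le)]
    decide
  · have hps : 0 < (Ms a).det * (Ms b).det := by nlinarith [mul_pos h₁ h₂]
    rw [if_pos hps, if_pos h₁, if_pos h₂]
    decide

end Main
end

section
/- Given continuous paths V:[0,1]→Gr_k(ℝⁿ) and W:[0,1]→Gr_{n−k}(ℝⁿ) with V(0)+W(0)=ℝⁿ and V(1)+W(1)=ℝⁿ, and defining W̃:[0,2]→Gr_{n−k}(ℝⁿ) by W̃(t)=W(t) for t∈[0,1] and W̃(t)=W(2−t) for t∈[1,2], there exists a continuous path Ṽ:[0,2]→Gr_k(ℝⁿ) such that (1) Ṽ restricted to [0,1] equals V, (2) Ṽ(0)=Ṽ(2), and (3) Ṽ(t)+W̃(t)=ℝⁿ for every t∈[1,2]. -/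
open Module

/-- The orthogonal projection of `ℝⁿ` onto a subspace `V`, as an endomorphism. -/
noncomputable def gapProj {n : ℕ} (V : Submodule ℝ (EuclideanSpace ℝ (Fin n))) :
    EuclideanSpace ℝ (Fin n) →L[ℝ] EuclideanSpace ℝ (Fin n) :=
  V.subtypeL.comp (Submodule.orthogonalProjectionOnto V)

/-- A path of subspaces is continuous (for the gap-metric topology of the
Grassmannian) iff the corresponding path of orthogonal projections is continuous. -/
def GapContinuousOn {n : ℕ} (V : ℝ → Submodule ℝ (EuclideanSpace ℝ (Fin n)))
    (s : Set ℝ) : Prop :=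
  ContinuousOn (fun t => gapProj (V t)) s

variable {n : ℕ}

local notation "E" => EuclideanSpace ℝ (Fin n)

lemma gapProj_apply_mem (U : Submodule ℝ E) (x : E) : gapProj U x ∈ U :=
  (Submodule.orthogonalProjectionOnto U x).2

lemma gapProj_eq_self (U : Submodule ℝ E) {x : E} (h : x ∈ U) : gapProj U x = x :=
  Submodule.starProjection_eq_self_iff.mpr h

lemma gapProj_idem (U : Submodule ℝ E) : gapProj U * gapProj U = gapProj U :=
  ContinuousLinearMap.ext fun x => gapProj_eq_self U (gapProj_apply_mem U x)

lemma gapProj_sa (U : Submodule ℝ E) : IsSelfAdjoint (gapProj U) :=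
  isSelfAdjoint_starProjection U

lemma range_gapProj (U : Submodule ℝ E) : LinearMap.range (gapProj U).toLinearMap = U := by
  apply le_antisymm
  · rintro x ⟨y, rfl⟩
    exact gapProj_apply_mem U y
  · intro x hx
    exact ⟨x, gapProj_eq_self U hx⟩

lemma gapProj_eq_of (U : Submodule ℝ E) (P : E →L[ℝ] E) (hidem : P * P = P)
    (hsa : IsSelfAdjoint P) (hr : LinearMap.range P.toLinearMap = U) : gapProj U = P := by
  refine ContinuousLinearMap.ext fun x => ?_
  have hmem : P x ∈ U := hr ▸ LinearMap.mem_range_self _ x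
  have horth : ∀ w ∈ U, @inner ℝ _ _ (x - P x) w = (0 : ℝ) := by
    intro w hw
    obtain ⟨y, rfl⟩ := hr.symm ▸ hw
    have h2 : @inner ℝ _ _ (x - P x) (P y) = @inner ℝ _ _ (P (x - P x)) y := by
      rw [← ContinuousLinearMap.adjoint_inner_left, hsa.adjoint_eq]
    rw [ContinuousLinearMap.coe_coe, h2]
    have : P (x - P x) = 0 := by
      have := congrArg (fun f => f x) hidem
      simp only [ContinuousLinearMap.mul_apply] at this
      simp [map_sub, this]
    simp [this]
  exact Submodule.eq_starProjection_of_mem_of_inner_eq_zero (K := U) hmem horth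


lemma isUnit_of_idem (T : E →L[ℝ] E) (hT : T * T = T) :
    IsUnit (T + star T - 1) := by
  set S : E →L[ℝ] E := T + star T - 1 with hS
  have hT' : star T * star T = star T := by
    have := congrArg star hT
    rwa [star_mul] at this
  have hTS : T * S = T * star T := by
    rw [hS, mul_sub, mul_add, mul_one, hT]; abel
  have hTS' : star T * S = star T * T := by
    rw [hS, mul_sub, mul_add, mul_one, hT']; abel
  have hinj : Function.Injective S := by
    intro x y hxy
    rw [← sub_eq_zero, ← map_sub] at hxy
    set z := x - y with hz
    have h1 : T (star T z) = 0 := by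
      have : (T * S) z = (T * star T) z := by rw [hTS]
      simpa [ContinuousLinearMap.mul_apply, hxy] using this.symm
    have h2 : star T (T z) = 0 := by
      have : (star T * S) z = (star T * T) z := by rw [hTS']
      simpa [ContinuousLinearMap.mul_apply, hxy] using this.symm
    rw [ContinuousLinearMap.star_eq_adjoint] at h1 h2
    have hz1 : ContinuousLinearMap.adjoint T z = 0 := by
      have : @inner ℝ _ _ (ContinuousLinearMap.adjoint T z) (ContinuousLinearMap.adjoint T z) = (0:ℝ) := by
        rw [ContinuousLinearMap.adjoint_inner_left, h1, inner_zero_right]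
      exact inner_self_eq_zero.mp this
    have hz2 : T z = 0 := by
      have : @inner ℝ _ _ (T z) (T z) = (0:ℝ) := by
        rw [← ContinuousLinearMap.adjoint_inner_left, h2, inner_zero_left]
      exact inner_self_eq_zero.mp this
    have : S z = T z + ContinuousLinearMap.adjoint T z - z := by
      rw [hS, ContinuousLinearMap.star_eq_adjoint]; rfl
    rw [hxy, hz1, hz2] at this
    have hz0 : z = 0 := by simpa using this
    rw [← sub_eq_zero, ← hz]; exact hz0
  have hsurj : Function.Surjective S :=
    (LinearMap.injective_iff_surjective (f := (S : E →ₗ[ℝ] E))).mp hinj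
  let e : E ≃ₗ[ℝ] E := LinearEquiv.ofBijective (S : E →ₗ[ℝ] E) ⟨hinj, hsurj⟩
  let eC : E ≃L[ℝ] E := e.toContinuousLinearEquiv
  refine ⟨⟨S, eC.symm.toContinuousLinearMap, ?_, ?_⟩, rfl⟩
  · refine ContinuousLinearMap.ext fun x => ?_
    show S (eC.symm x) = x
    exact eC.apply_symm_apply x
  · refine ContinuousLinearMap.ext fun x => ?_
    show eC.symm (S x) = x
    exact eC.symm_apply_apply x

lemma gapProj_range_of_idem (T : E →L[ℝ] E) (hT : T * T = T) :
    gapProj (LinearMap.range T.toLinearMap) = T * Ring.inverse (T + star T - 1) := by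
  set S : E →L[ℝ] E := T + star T - 1 with hS
  have hU : IsUnit S := isUnit_of_idem T hT
  set R : E →L[ℝ] E := Ring.inverse S with hR
  have hSR : S * R = 1 := Ring.mul_inverse_cancel _ hU
  have hRS : R * S = 1 := Ring.inverse_mul_cancel _ hU
  have hT' : star T * star T = star T := by
    have := congrArg star hT
    rwa [star_mul] at this
  have hTS : T * S = T * star T := by
    rw [hS, mul_sub, mul_add, mul_one, hT]; abel
  have hT'S : star T * S = star T * T := by
    rw [hS, mul_sub, mul_add, mul_one, hT']; abel
  have hST : S * T = star T * T := by
    rw [hS, sub_mul, add_mul, one_mul, hT]; abel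
  have hST' : S * star T = T * star T := by
    rw [hS, sub_mul, add_mul, one_mul, hT']; abel
  have conj : ∀ A B : E →L[ℝ] E, A * S = S * B → R * A = B * R := by
    intro A B h
    calc R * A = R * A * (S * R) := by rw [hSR, mul_one]
      _ = R * (A * S) * R := by rw [← mul_assoc, mul_assoc R A S]
      _ = R * (S * B) * R := by rw [h]
      _ = (R * S) * B * R := by rw [← mul_assoc]
      _ = B * R := by rw [hRS, one_mul]
  have hRT : R * T = star T * R := conj T (star T) (by rw [hTS, hST'])
  have hRT' : R * star T = T * R := conj (star T) T (by rw [hT'S, hST])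
  set P : E →L[ℝ] E := T * R with hP
  have hPP : P * P = P := by
    have h1 : R * (T * R) = star T * (R * R) := by rw [← mul_assoc, hRT, mul_assoc]
    calc P * P = T * (R * (T * R)) := by simp only [hP, mul_assoc]
      _ = T * (star T * (R * R)) := by rw [h1]
      _ = (T * star T) * (R * R) := by rw [← mul_assoc]
      _ = (T * S) * (R * R) := by rw [hTS]
      _ = T * ((S * R) * R) := by simp only [mul_assoc]
      _ = P := by rw [hSR, one_mul, hP]
  have hSsa : star S = S := by
    have h : IsSelfAdjoint S := by
      rw [hS]
      exact (IsSelfAdjoint.add_star_self T).sub (IsSelfAdjoint.one (R := EuclideanSpace ℝ (Fin n) →L[ℝ] EuclideanSpace ℝ (Fin n)))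
    exact h
  have hRsa : star R = R := by
    have h1 : star R * S = 1 := by
      have := congrArg star hSR
      rwa [star_mul, hSsa, star_one] at this
    calc star R = star R * (S * R) := by rw [hSR, mul_one]
      _ = (star R * S) * R := by rw [mul_assoc]
      _ = R := by rw [h1, one_mul]
  have hPsa : IsSelfAdjoint P := by
    show star P = P
    rw [hP, star_mul, hRsa, hRT']
  have hPT : P * T = T := by
    calc P * T = T * (R * T) := by simp only [hP, mul_assoc]
      _ = T * (star T * R) := by rw [hRT]
      _ = T * (S * R) := by rw [← mul_assoc, ← hTS, mul_assoc]
      _ = T := by rw [hSR, mul_one]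
  have hrange : LinearMap.range P.toLinearMap = LinearMap.range T.toLinearMap := by
    apply le_antisymm
    · rintro x ⟨y, rfl⟩
      exact ⟨R y, rfl⟩
    · rintro x ⟨y, rfl⟩
      refine ⟨T y, ?_⟩
      have := congrArg (fun f => f y) hPT
      simpa [ContinuousLinearMap.mul_apply] using this
  exact gapProj_eq_of _ P hPP hPsa hrange


section Graph

/-- The graph operator: idempotent with range the graph of `B` over `W'ᗮ`. -/
noncomputable def graphT (W' : Submodule ℝ (EuclideanSpace ℝ (Fin n)))
    (B : EuclideanSpace ℝ (Fin n) →L[ℝ] EuclideanSpace ℝ (Fin n)) :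
    EuclideanSpace ℝ (Fin n) →L[ℝ] EuclideanSpace ℝ (Fin n) :=
  (1 - gapProj W') + gapProj W' * B * (1 - gapProj W')

lemma qp_eq_zero (W' : Submodule ℝ E) : (1 - gapProj W') * gapProj W' = 0 := by
  rw [sub_mul, one_mul, gapProj_idem, sub_self]

lemma pq_eq_zero (W' : Submodule ℝ E) : gapProj W' * (1 - gapProj W') = 0 := by
  rw [mul_sub, mul_one, gapProj_idem, sub_self]

lemma qq_eq_q (W' : Submodule ℝ E) :
    (1 - gapProj W') * (1 - gapProj W') = (1 - gapProj W') := by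
  rw [mul_sub, mul_one, sub_mul, one_mul, gapProj_idem, sub_self, sub_zero]

lemma graphT_idem (W' : Submodule ℝ E) (B : E →L[ℝ] E) :
    graphT W' B * graphT W' B = graphT W' B := by
  set p := gapProj W' with hp
  set q : E →L[ℝ] E := 1 - p with hq
  have hqp : q * p = 0 := qp_eq_zero W'
  have hpq : p * q = 0 := pq_eq_zero W'
  have hqq : q * q = q := qq_eq_q W'
  show (q + p * B * q) * (q + p * B * q) = q + p * B * q
  have h1 : q * (p * B * q) = 0 := by
    rw [← mul_assoc, ← mul_assoc, hqp, zero_mul, zero_mul]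
  have h2 : (p * B * q) * q = p * B * q := by
    rw [mul_assoc, hqq]
  have h3 : (p * B * q) * (p * B * q) = 0 := by
    rw [mul_assoc, h1, mul_zero]
  rw [add_mul, mul_add, mul_add, hqq, h1, h2, h3, add_zero, add_zero]

lemma range_q (W' : Submodule ℝ E) :
    LinearMap.range ((1 : E →L[ℝ] E) - gapProj W').toLinearMap = W'ᗮ := by
  apply le_antisymm
  · rintro x ⟨y, rfl⟩
    have : ((1 : E →L[ℝ] E) - gapProj W') y = y - gapProj W' y := rfl
    rw [ContinuousLinearMap.coe_coe, this]
    exact Submodule.sub_starProjection_mem_orthogonal (K := W') y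
  · intro x hx
    refine ⟨x, ?_⟩
    have h0 : gapProj W' x = 0 := by
      show (W'.subtypeL.comp (Submodule.orthogonalProjectionOnto W')) x = 0
      simp [Submodule.orthogonalProjectionOnto_apply_of_mem_orthogonal hx]
    show x - gapProj W' x = x
    rw [h0, sub_zero]

lemma graphT_apply (W' : Submodule ℝ E) (B : E →L[ℝ] E) (x : E) :
    graphT W' B x = (x - gapProj W' x) + gapProj W' (B (x - gapProj W' x)) := rfl

lemma graphT_sup (W' : Submodule ℝ E) (B : E →L[ℝ] E) :
    LinearMap.range (graphT W' B).toLinearMap ⊔ W' = ⊤ := by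
  rw [eq_top_iff]
  intro x _
  have hx : x = graphT W' B x + (gapProj W' x - gapProj W' (B (x - gapProj W' x))) := by
    rw [graphT_apply]; abel
  rw [hx]
  refine Submodule.add_mem_sup (LinearMap.mem_range_self _ x) ?_
  exact Submodule.sub_mem _ (gapProj_apply_mem _ _) (gapProj_apply_mem _ _)

lemma graphT_finrank (W' : Submodule ℝ E) (B : E →L[ℝ] E) :
    finrank ℝ (LinearMap.range (graphT W' B).toLinearMap) = finrank ℝ W'ᗮ := by
  set p := gapProj W' with hp
  set q : E →L[ℝ] E := 1 - p with hq
  set T := graphT W' B with hT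
  have hqT : q * T = q := by
    show q * (q + p * B * q) = q
    rw [mul_add, qq_eq_q, ← mul_assoc, ← mul_assoc, qp_eq_zero, zero_mul, zero_mul, add_zero]
  have hTq : T * q = T := by
    show (q + p * B * q) * q = q + p * B * q
    rw [add_mul, qq_eq_q, mul_assoc, qq_eq_q]
  apply le_antisymm
  · have h1 : LinearMap.range T.toLinearMap = LinearMap.range (T * q).toLinearMap := by rw [hTq]
    have h2 : LinearMap.range (T * q).toLinearMap ≤ Submodule.map (T : E →ₗ[ℝ] E) (LinearMap.range q.toLinearMap) := by
      rintro x ⟨y, rfl⟩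
      exact ⟨q y, LinearMap.mem_range_self _ y, rfl⟩
    calc finrank ℝ (LinearMap.range T.toLinearMap)
        ≤ finrank ℝ (Submodule.map (T : E →ₗ[ℝ] E) (LinearMap.range q.toLinearMap)) := by
          rw [h1]; exact Submodule.finrank_mono h2
      _ ≤ finrank ℝ (LinearMap.range q.toLinearMap) := Submodule.finrank_map_le _ _
      _ = finrank ℝ W'ᗮ := by rw [range_q]
  · have h1 : LinearMap.range q.toLinearMap = LinearMap.range (q * T).toLinearMap := by rw [hqT]
    have h2 : LinearMap.range (q * T).toLinearMap ≤ Submodule.map (q : E →ₗ[ℝ] E) (LinearMap.range T.toLinearMap) := by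
      rintro x ⟨y, rfl⟩
      exact ⟨T y, LinearMap.mem_range_self _ y, rfl⟩
    calc finrank ℝ W'ᗮ = finrank ℝ (LinearMap.range q.toLinearMap) := by rw [range_q]
      _ ≤ finrank ℝ (Submodule.map (q : E →ₗ[ℝ] E) (LinearMap.range T.toLinearMap)) := by
          rw [h1]; exact Submodule.finrank_mono h2
      _ ≤ finrank ℝ (LinearMap.range T.toLinearMap) := Submodule.finrank_map_le _ _

end Graph

section Realize

/-- The (continuous) linear projection onto `V` along a complement `W`. -/
noncomputable def projAlong (V W : Submodule ℝ (EuclideanSpace ℝ (Fin n)))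
    (hc : IsCompl V W) :
    EuclideanSpace ℝ (Fin n) →L[ℝ] EuclideanSpace ℝ (Fin n) :=
  LinearMap.toContinuousLinearMap (V.subtype ∘ₗ V.projectionOnto W hc)

lemma projAlong_mem (V W : Submodule ℝ E) (hc : IsCompl V W) (x : E) :
    projAlong V W hc x ∈ V := by
  simp [projAlong]

lemma projAlong_left (V W : Submodule ℝ E) (hc : IsCompl V W) {v : E} (hv : v ∈ V) :
    projAlong V W hc v = v := by
  have : V.projectionOnto W hc v = ⟨v, hv⟩ := by
    exact_mod_cast Submodule.projectionOnto_apply_left hc ⟨v, hv⟩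
  simp [projAlong, this]

lemma projAlong_right (V W : Submodule ℝ E) (hc : IsCompl V W) {w : E} (hw : w ∈ W) :
    projAlong V W hc w = 0 := by
  have : V.projectionOnto W hc w = 0 :=
    Submodule.projectionOnto_apply_of_mem_right hc hw
  simp [projAlong, this]

lemma graphT_range_projAlong (V W : Submodule ℝ E) (hc : IsCompl V W) :
    LinearMap.range (graphT W (projAlong V W hc)).toLinearMap = V := by
  set π := projAlong V W hc with hπ
  set p := gapProj W with hp
  apply le_antisymm
  · rintro x ⟨y, rfl⟩
    rw [ContinuousLinearMap.coe_coe, graphT_apply]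
    set z := y - gapProj W y with hz
    have hzp : gapProj W z = 0 := by
      rw [hz, map_sub, gapProj_eq_self W (gapProj_apply_mem W y), sub_self]
    obtain ⟨v, hv, w, hw, hvw⟩ := Submodule.mem_sup.mp
      (by rw [hc.sup_eq_top]; trivial : z ∈ V ⊔ W)
    have hπz : π z = v := by
      rw [← hvw, map_add, projAlong_left V W hc hv, projAlong_right V W hc hw, add_zero]
    have hpπz : gapProj W (π z) = -w := by
      have h2 : π z = z - w := by rw [hπz, ← hvw]; abel
      rw [h2, map_sub, hzp, gapProj_eq_self W hw, zero_sub]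
    rw [hpπz, ← hvw]
    have : v + w + -w = v := by abel
    rw [this]
    exact hv
  · intro v hv
    refine ⟨v, ?_⟩
    rw [ContinuousLinearMap.coe_coe, graphT_apply]
    set z := v - gapProj W v with hz
    have hπz : π z = v := by
      rw [hz, map_sub, projAlong_left V W hc hv,
        projAlong_right V W hc (gapProj_apply_mem W v), sub_zero]
    rw [hπz]
    show v - gapProj W v + gapProj W v = v
    abel

lemma isCompl_of_sup_finrank (V W : Submodule ℝ E) (hsup : V ⊔ W = ⊤)
    (hd : finrank ℝ V + finrank ℝ W ≤ n) : IsCompl V W := by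
  have hE : finrank ℝ (EuclideanSpace ℝ (Fin n)) = n := by simp
  have h := Submodule.finrank_sup_add_finrank_inf_eq V W
  rw [hsup] at h
  rw [finrank_top, hE] at h
  have hinf : finrank ℝ ↥(V ⊓ W) = 0 := by omega
  have : V ⊓ W = ⊥ := Submodule.finrank_eq_zero.mp hinf
  exact ⟨disjoint_iff.mpr this, codisjoint_iff.mpr hsup⟩

end Realize

/-- given continuous paths `V : [0,1] → Gr_k(ℝⁿ)` and
`W : [0,1] → Gr_{n−k}(ℝⁿ)` with transversal endpoints, and the doubled path
`W̃(t) = W(t)` on `[0,1]`, `W̃(t) = W(2−t)` on `[1,2]`, there is a continuous closed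
path `Ṽ : [0,2] → Gr_k(ℝⁿ)` extending `V` which is transversal to `W̃` on `[1,2]`. -/
theorem exists_closed_extension_transversal
    (n k : ℕ)
    (V W : ℝ → Submodule ℝ (EuclideanSpace ℝ (Fin n)))
    (hV : GapContinuousOn V (Set.Icc 0 1)) (hW : GapContinuousOn W (Set.Icc 0 1))
    (hVk : ∀ t ∈ Set.Icc (0 : ℝ) 1, finrank ℝ (V t) = k)
    (hWk : ∀ t ∈ Set.Icc (0 : ℝ) 1, finrank ℝ (W t) = n - k)
    (h0 : V 0 ⊔ W 0 = ⊤) (h1 : V 1 ⊔ W 1 = ⊤) :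
    ∃ Vt : ℝ → Submodule ℝ (EuclideanSpace ℝ (Fin n)),
      GapContinuousOn Vt (Set.Icc 0 2) ∧
      (∀ t ∈ Set.Icc (0 : ℝ) 2, finrank ℝ (Vt t) = k) ∧
      (∀ t ∈ Set.Icc (0 : ℝ) 1, Vt t = V t) ∧
      Vt 0 = Vt 2 ∧
      (∀ t ∈ Set.Icc (1 : ℝ) 2, Vt t ⊔ W (2 - t) = ⊤) := by
  have h0m : (0:ℝ) ∈ Set.Icc (0:ℝ) 1 := by norm_num
  have h1m : (1:ℝ) ∈ Set.Icc (0:ℝ) 1 := by norm_num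
  have hEn : finrank ℝ (EuclideanSpace ℝ (Fin n)) = n := by simp
  have hkn : k ≤ n := by
    have h := hVk 0 h0m
    have h2 := Submodule.finrank_le (V 0)
    rw [h, hEn] at h2
    exact h2
  have hc1 : IsCompl (V 1) (W 1) := by
    apply isCompl_of_sup_finrank _ _ h1
    rw [hVk 1 h1m, hWk 1 h1m]; omega
  have hc0 : IsCompl (V 0) (W 0) := by
    apply isCompl_of_sup_finrank _ _ h0
    rw [hVk 0 h0m, hWk 0 h0m]; omega
  set π1 := projAlong (V 1) (W 1) hc1 with hπ1
  set π0 := projAlong (V 0) (W 0) hc0 with hπ0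
  set c : ℝ → ℝ := fun t => max 1 (min t 2) with hc
  set B : ℝ → (EuclideanSpace ℝ (Fin n) →L[ℝ] EuclideanSpace ℝ (Fin n)) :=
    fun t => (2 - c t) • π1 + (c t - 1) • π0 with hB
  set T : ℝ → (EuclideanSpace ℝ (Fin n) →L[ℝ] EuclideanSpace ℝ (Fin n)) :=
    fun t => graphT (W (2 - c t)) (B t) with hT
  have hcid : ∀ t : ℝ, 1 ≤ t → t ≤ 2 → c t = t := by
    intro t h1t h2t
    rw [hc]
    simp only [min_eq_left h2t, max_eq_right h1t]
  have hc1' : c 1 = 1 := hcid 1 le_rfl (by norm_num)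
  have hc2' : c 2 = 2 := hcid 2 (by norm_num) le_rfl
  have hB1 : B 1 = π1 := by
    simp only [hB, hc1']; norm_num
    ext v
    simp
  have hB2 : B 2 = π0 := by
    simp only [hB, hc2']; norm_num
    ext v
    simp
  have hT1 : LinearMap.range (T 1).toLinearMap = V 1 := by
    rw [hT]
    simp only [hc1', hB1]
    norm_num
    exact graphT_range_projAlong (V 1) (W 1) hc1
  have hT2 : LinearMap.range (T 2).toLinearMap = V 0 := by
    rw [hT]
    simp only [hc2', hB2]
    norm_num
    exact graphT_range_projAlong (V 0) (W 0) hc0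
  refine ⟨fun t => if t ≤ 1 then V (max 0 (min t 1)) else LinearMap.range (T t).toLinearMap,
    ?_, ?_, ?_, ?_, ?_⟩
  · -- continuity
    have hcc : Continuous c := continuous_const.max (continuous_id.min continuous_const)
    have hmem : ∀ t : ℝ, 2 - c t ∈ Set.Icc (0:ℝ) 1 := by
      intro t
      constructor
      · have : c t ≤ 2 := by
          rw [hc]
          exact max_le (by norm_num) (min_le_right _ _)
        linarith
      · have : (1:ℝ) ≤ c t := le_max_left _ _
        linarith
    have hF : Continuous (fun t : ℝ => gapProj (W (2 - c t))) :=
      hW.comp_continuous (continuous_const.sub hcc) (fun x => hmem x)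
    have hBc : Continuous B := by
      rw [hB]
      exact ((continuous_const.sub hcc).smul continuous_const).add
        ((hcc.sub continuous_const).smul continuous_const)
    have hTc : Continuous T := by
      rw [hT]
      show Continuous fun t => (1 - gapProj (W (2 - c t))) +
        gapProj (W (2 - c t)) * B t * (1 - gapProj (W (2 - c t)))
      exact (continuous_const.sub hF).add
        ((hF.mul hBc).mul (continuous_const.sub hF))
    have hstar : Continuous (fun A : EuclideanSpace ℝ (Fin n) →L[ℝ] EuclideanSpace ℝ (Fin n) =>
        star A) := by
      simp only [ContinuousLinearMap.star_eq_adjoint]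
      exact ContinuousLinearMap.adjoint.toLinearIsometry.continuous
    have hSc : Continuous (fun t => T t + star (T t) - 1) :=
      (hTc.add (hstar.comp hTc)).sub continuous_const
    have hUt : ∀ t : ℝ, IsUnit (T t + star (T t) - 1) :=
      fun t => isUnit_of_idem _ (graphT_idem _ _)
    have hInv : Continuous (fun t => Ring.inverse (T t + star (T t) - 1)) := by
      rw [continuous_iff_continuousAt]
      intro x
      have h := NormedRing.inverse_continuousAt (hUt x).unit
      rw [IsUnit.unit_spec] at h
      exact ContinuousAt.comp (g := Ring.inverse)
        (f := fun t => T t + star (T t) - 1) (x := x) h hSc.continuousAt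
    have hg : Continuous (fun t => T t * Ring.inverse (T t + star (T t) - 1)) :=
      hTc.mul hInv
    have hmemV : ∀ t : ℝ, max 0 (min t 1) ∈ Set.Icc (0:ℝ) 1 := by
      intro t
      exact ⟨le_max_left _ _, max_le (by norm_num) (min_le_right _ _)⟩
    have hf : Continuous (fun t : ℝ => gapProj (V (max 0 (min t 1)))) :=
      hV.comp_continuous
        (continuous_const.max (continuous_id.min continuous_const)) (fun x => hmemV x)
    have hfun : (fun t => gapProj (if t ≤ 1 then V (max 0 (min t 1))
        else LinearMap.range (T t).toLinearMap)) = fun t => if t ≤ 1 then gapProj (V (max 0 (min t 1)))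
        else T t * Ring.inverse (T t + star (T t) - 1) := by
      funext t
      by_cases ht : t ≤ 1
      · rw [if_pos ht, if_pos ht]
      · rw [if_neg ht, if_neg ht]
        exact gapProj_range_of_idem _ (graphT_idem _ _)
    show ContinuousOn (fun t => gapProj (if t ≤ 1 then V (max 0 (min t 1))
        else LinearMap.range (T t).toLinearMap)) (Set.Icc 0 2)
    rw [hfun]
    apply Continuous.continuousOn
    apply Continuous.if_le hf hg continuous_id continuous_const
    intro x hx
    subst hx
    rw [min_self, max_eq_right (by norm_num : (0:ℝ) ≤ 1), ← hT1]
    exact gapProj_range_of_idem _ (graphT_idem _ _)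
  · -- finrank
    intro t ht
    beta_reduce
    by_cases htl : t ≤ 1
    · rw [if_pos htl]
      have : max 0 (min t 1) = t := by
        rw [min_eq_left htl, max_eq_right ht.1]
      rw [this]
      exact hVk t ⟨ht.1, htl⟩
    · rw [if_neg htl]
      have h1t : (1:ℝ) ≤ t := le_of_not_ge htl
      have hct : c t = t := hcid t h1t ht.2
      have hw2t : (2 - t) ∈ Set.Icc (0:ℝ) 1 := ⟨by linarith [ht.2], by linarith⟩
      show finrank ℝ ↥(LinearMap.range (graphT (W (2 - c t)) (B t)).toLinearMap) = k
      rw [graphT_finrank, hct]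
      have horth := Submodule.finrank_add_finrank_orthogonal (K := W (2 - t))
      rw [hEn] at horth
      rw [hWk _ hw2t] at horth
      omega
  · -- restriction
    intro t ht
    dsimp only
    rw [if_pos ht.2]
    congr 1
    rw [min_eq_left ht.2, max_eq_right ht.1]
  · -- closed
    dsimp only
    rw [if_pos (by norm_num : (0:ℝ) ≤ 1), if_neg (by norm_num : ¬ (2:ℝ) ≤ 1)]
    rw [hT2]
    congr 1
    rw [min_eq_left (by norm_num : (0:ℝ) ≤ 1), max_self]
  · -- transversality
    intro t ht
    dsimp only
    by_cases htl : t ≤ 1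
    · have : t = 1 := le_antisymm htl ht.1
      subst this
      rw [if_pos le_rfl]
      rw [min_self, max_eq_right (by norm_num : (0:ℝ) ≤ 1)]
      have h3 : (2:ℝ) - 1 = 1 := by norm_num
      rw [h3]
      exact h1
    · rw [if_neg htl]
      have h1t : (1:ℝ) ≤ t := le_of_not_ge htl
      have hct : c t = t := hcid t h1t ht.2
      have h3 := graphT_sup (W (2 - c t)) (B t)
      rw [hct] at h3
      show LinearMap.range (graphT (W (2 - c t)) (B t)).toLinearMap ⊔ W (2 - t) = ⊤
      rw [hct]
      exact h3
end
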